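/- On any almost Hermitian manifold of dimension 2n with n > 1, the component of the exterior derivative dθ of the Lee form θ that is proportional to the Kähler form ω vanishes; equivalently, ⟨dθ, ω⟩ = 0 pointwise. -/

import Mathlib

namespace AHProof

structure Setup (C V : Type) [CommRing C] [Algebra ℝ C] [AddCommGroup V] [Module C V] where
  n : ℕ
  bk : V → V → V
  act : V → C → C
  g : V → V → C
  J : V → V
  e : Fin (2 * n) → V
  lc : V → V → V
  hg_symm : ∀ X Y, g X Y = g Y X
  hg_add : ∀ X Y Z, g (X + Y) Z = g X Z + g Y Z
  hg_smul : ∀ (f : C) (X Y), g (f • X) Y = f * g X Y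
  hJ_add : ∀ X Y, J (X + Y) = J X + J Y
  hJ_smul : ∀ (f : C) (X), J (f • X) = f • J X
  hJ_sq : ∀ X, J (J X) = -X
  hJ_iso : ∀ X Y, g (J X) (J Y) = g X Y
  h_orth : ∀ i j, g (e i) (e j) = if i = j then 1 else 0
  h_span : ∀ X, X = ∑ i, g X (e i) • e i
  hact_addf : ∀ X (f h : C), act X (f + h) = act X f + act X h
  hact_leib : ∀ X (f h : C), act X (f * h) = f * act X h + act X f * h
  hact_addX : ∀ X Y f, act (X + Y) f = act X f + act Y f
  hact_smulX : ∀ (f : C) X h, act (f • X) h = f * act X h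
  hact_const : ∀ X (r : ℝ), act X (algebraMap ℝ C r) = 0
  h_tf : ∀ X Y, bk X Y = lc X Y - lc Y X
  h_jacobi : ∀ X Y Z, bk (bk X Y) Z + bk (bk Y Z) X + bk (bk Z X) Y = 0
  h_actbk : ∀ X Y f, act (bk X Y) f = act X (act Y f) - act Y (act X f)
  hlc_addl : ∀ X Y Z, lc (X + Y) Z = lc X Z + lc Y Z
  hlc_addr : ∀ X Y Z, lc X (Y + Z) = lc X Y + lc X Z
  hlc_smull : ∀ (f : C) X Y, lc (f • X) Y = f • lc X Y
  hlc_leib : ∀ (f : C) X Y, lc X (f • Y) = act X f • Y + f • lc X Y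
  hlc_metric : ∀ X Y Z, act X (g Y Z) = g (lc X Y) Z + g Y (lc X Z)

namespace Setup

variable {C V : Type} [CommRing C] [Algebra ℝ C] [AddCommGroup V] [Module C V]
variable (S : Setup C V)

/-! ### Basic derived lemmas -/

lemma act_zero (X : V) : S.act X 0 = 0 := by
  simpa using S.hact_const X 0

lemma act_one (X : V) : S.act X 1 = 0 := by
  simpa using S.hact_const X 1

lemma act_neg (X : V) (f : C) : S.act X (-f) = -S.act X f := by
  have h := S.hact_addf X f (-f)
  simp only [add_neg_cancel, S.act_zero] at h
  exact eq_neg_of_add_eq_zero_right h.symm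

lemma act_sub (X : V) (f h : C) : S.act X (f - h) = S.act X f - S.act X h := by
  rw [sub_eq_add_neg, S.hact_addf, S.act_neg, sub_eq_add_neg]

lemma act_negX (X : V) (f : C) : S.act (-X) f = -S.act X f := by
  rw [← neg_one_smul C X, S.hact_smulX, neg_one_mul]

lemma act_subX (X Y : V) (f : C) : S.act (X - Y) f = S.act X f - S.act Y f := by
  rw [sub_eq_add_neg, S.hact_addX, S.act_negX, sub_eq_add_neg]

lemma act_aM (X : V) (r : ℝ) (f : C) :
    S.act X (algebraMap ℝ C r * f) = algebraMap ℝ C r * S.act X f := by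
  rw [S.hact_leib, S.hact_const]; ring

lemma act_sum (X : V) {ι : Type*} (s : Finset ι) (f : ι → C) :
    S.act X (∑ i ∈ s, f i) = ∑ i ∈ s, S.act X (f i) := by
  classical
  induction s using Finset.cons_induction with
  | empty => simpa using S.act_zero X
  | cons a s ha ih => rw [Finset.sum_cons, S.hact_addf, ih, Finset.sum_cons]

lemma g_add2 (X Y Z : V) : S.g X (Y + Z) = S.g X Y + S.g X Z := by
  rw [S.hg_symm, S.hg_add, S.hg_symm Y, S.hg_symm Z]

lemma g_smul2 (f : C) (X Y : V) : S.g X (f • Y) = f * S.g X Y := by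
  rw [S.hg_symm, S.hg_smul, S.hg_symm]

lemma g_neg1 (X Y : V) : S.g (-X) Y = -S.g X Y := by
  rw [← neg_one_smul C X, S.hg_smul, neg_one_mul]

lemma g_neg2 (X Y : V) : S.g X (-Y) = -S.g X Y := by
  rw [S.hg_symm, S.g_neg1, S.hg_symm]

lemma g_sub1 (X Y Z : V) : S.g (X - Y) Z = S.g X Z - S.g Y Z := by
  rw [sub_eq_add_neg, S.hg_add, S.g_neg1, sub_eq_add_neg]

lemma g_sub2 (X Y Z : V) : S.g X (Y - Z) = S.g X Y - S.g X Z := by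
  rw [S.hg_symm, S.g_sub1, S.hg_symm Y, S.hg_symm Z]

lemma g_zero1 (X : V) : S.g 0 X = 0 := by
  have : (0:V) = (0:C) • (0:V) := by simp
  rw [this, S.hg_smul, zero_mul]

lemma g_zero2 (X : V) : S.g X 0 = 0 := by rw [S.hg_symm, S.g_zero1]

lemma J_neg (X : V) : S.J (-X) = -S.J X := by
  rw [← neg_one_smul C X, S.hJ_smul, neg_one_smul]

lemma J_sub (X Y : V) : S.J (X - Y) = S.J X - S.J Y := by
  rw [sub_eq_add_neg, S.hJ_add, S.J_neg, sub_eq_add_neg]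

lemma lc_zero2 (X : V) : S.lc X 0 = 0 := by
  have : (0:V) = (0:C) • (0:V) := by simp
  rw [this, S.hlc_leib]
  simp [S.act_zero]

lemma act_neg_one (X : V) : S.act X (-1) = 0 := by
  have : ((-1 : C)) = algebraMap ℝ C (-1) := by simp
  rw [this]
  exact S.hact_const X (-1)

lemma lc_neg2 (X Y : V) : S.lc X (-Y) = -S.lc X Y := by
  rw [← neg_one_smul C Y, S.hlc_leib, S.act_neg_one]
  simp

lemma lc_sub2 (X Y Z : V) : S.lc X (Y - Z) = S.lc X Y - S.lc X Z := by
  rw [sub_eq_add_neg, S.hlc_addr, S.lc_neg2, sub_eq_add_neg]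

lemma lc_neg1 (X Y : V) : S.lc (-X) Y = -S.lc X Y := by
  rw [← neg_one_smul C X, S.hlc_smull, neg_one_smul]

lemma lc_sub1 (X Y Z : V) : S.lc (X - Y) Z = S.lc X Z - S.lc Y Z := by
  rw [sub_eq_add_neg, S.hlc_addl, S.lc_neg1, sub_eq_add_neg]

lemma act_g_frame (X : V) (i j : Fin (2 * S.n)) : S.act X (S.g (S.e i) (S.e j)) = 0 := by
  rw [S.h_orth]
  split
  · exact S.act_one X
  · exact S.act_zero X

lemma gJskew (X Y : V) : S.g (S.J X) Y = -S.g (S.J Y) X := by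
  have h1 : S.g (S.J X) Y = S.g (S.J (S.J X)) (S.J Y) := (S.hJ_iso (S.J X) Y).symm
  rw [h1, S.hJ_sq, S.g_neg1, S.hg_symm]

lemma gJ2 (X Y : V) : S.g X (S.J Y) = -S.g (S.J X) Y := by
  rw [S.hg_symm, S.gJskew]

lemma half_cancel (x : C) (h : (2:C) * x = 0) : x = 0 := by
  have h2 : (algebraMap ℝ C) 2 = (2:C) := by
    rw [map_ofNat]
  calc x = algebraMap ℝ C (1/2) * ((2:C) * x) := by
        rw [← h2, ← mul_assoc, ← map_mul]
        norm_num
    _ = 0 := by rw [h, mul_zero]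

lemma skew_sum {m : ℕ} (f : Fin m → Fin m → C) (h : ∀ i j, f i j = -f j i) :
    ∑ i, ∑ j, f i j = 0 := by
  have h1 : ∑ i, ∑ j, f i j = -∑ i, ∑ j, f i j := by
    calc ∑ i, ∑ j, f i j = ∑ i, ∑ j, -f j i := by
          refine Finset.sum_congr rfl fun i _ => Finset.sum_congr rfl fun j _ => h i j
      _ = -∑ i, ∑ j, f j i := by simp
      _ = -∑ i, ∑ j, f i j := by rw [Finset.sum_comm]
  apply half_cancel
  linear_combination h1

lemma expand {F : V → C} (hadd : ∀ a b, F (a + b) = F a + F b)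
    (hsmul : ∀ (f : C) a, F (f • a) = f * F a) (X : V) :
    F X = ∑ i, S.g X (S.e i) * F (S.e i) := by
  classical
  have h0 : F 0 = 0 := by simpa using hsmul 0 0
  have key : ∀ (s : Finset (Fin (2 * S.n))) (c : Fin (2 * S.n) → C),
      F (∑ i ∈ s, c i • S.e i) = ∑ i ∈ s, c i * F (S.e i) := by
    intro s
    induction s using Finset.cons_induction with
    | empty => intro c; simpa using h0
    | cons a s ha ih =>
        intro c
        rw [Finset.sum_cons, hadd, hsmul, ih, Finset.sum_cons]
  conv_lhs => rw [S.h_span X]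
  exact key _ _

/-! ### Derived tensors -/

def ω (X Y : V) : C := S.g X (S.J Y)

def T3 (X Y Z : V) : C := S.act X (S.ω Y Z) - S.ω (S.lc X Y) Z - S.ω Y (S.lc X Z)

def cod (X : V) : C := -∑ i, S.T3 (S.e i) (S.e i) X

def R (X Y Z : V) : V :=
  S.lc X (S.lc Y Z) - S.lc Y (S.lc X Z) - S.lc (S.bk X Y) Z

def Rm (X Y Z W : V) : C := S.g (S.R X Y Z) W

def H (X Y Z W : V) : C :=
  S.act X (S.T3 Y Z W) - S.T3 (S.lc X Y) Z W - S.T3 Y (S.lc X Z) W - S.T3 Y Z (S.lc X W)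

lemma ω_skew (X Y : V) : S.ω X Y = -S.ω Y X := by
  simp only [ω]
  rw [S.gJ2, S.hg_symm]

lemma ω_add1 (X Y Z : V) : S.ω (X + Y) Z = S.ω X Z + S.ω Y Z := by
  simp only [ω, S.hg_add]

lemma ω_smul1 (f : C) (X Y : V) : S.ω (f • X) Y = f * S.ω X Y := by
  simp only [ω, S.hg_smul]

lemma ω_add2 (X Y Z : V) : S.ω X (Y + Z) = S.ω X Y + S.ω X Z := by
  simp only [ω, S.hJ_add, S.g_add2]

lemma ω_smul2 (f : C) (X Y : V) : S.ω X (f • Y) = f * S.ω X Y := by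
  simp only [ω, S.hJ_smul, S.g_smul2]

lemma T3_skew23 (X Y Z : V) : S.T3 X Y Z = -S.T3 X Z Y := by
  simp only [T3]
  rw [S.ω_skew Y Z, S.act_neg, S.ω_skew (S.lc X Y) Z, S.ω_skew Y (S.lc X Z)]
  ring

lemma T3_add1 (X X' Y Z : V) : S.T3 (X + X') Y Z = S.T3 X Y Z + S.T3 X' Y Z := by
  simp only [T3, S.hact_addX, S.hlc_addl, S.ω_add1, S.ω_add2]
  ring

lemma T3_smul1 (f : C) (X Y Z : V) : S.T3 (f • X) Y Z = f * S.T3 X Y Z := by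
  simp only [T3, S.hact_smulX, S.hlc_smull, S.ω_smul1, S.ω_smul2]
  ring

lemma T3_add2 (X Y Y' Z : V) : S.T3 X (Y + Y') Z = S.T3 X Y Z + S.T3 X Y' Z := by
  simp only [T3, S.ω_add1, S.hact_addf, S.hlc_addr]
  ring

lemma T3_smul2 (f : C) (X Y Z : V) : S.T3 X (f • Y) Z = f * S.T3 X Y Z := by
  simp only [T3, S.ω_smul1, S.hact_leib, S.hlc_leib, S.ω_add1]
  ring

lemma T3_add3 (X Y Z Z' : V) : S.T3 X Y (Z + Z') = S.T3 X Y Z + S.T3 X Y Z' := by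
  simp only [T3, S.ω_add2, S.hact_addf, S.hlc_addr]
  ring

lemma T3_smul3 (f : C) (X Y Z : V) : S.T3 X Y (f • Z) = f * S.T3 X Y Z := by
  simp only [T3, S.ω_smul2, S.hact_leib, S.hlc_leib, S.ω_add2]
  ring

lemma cod_add (X Y : V) : S.cod (X + Y) = S.cod X + S.cod Y := by
  simp only [cod, S.T3_add3]
  rw [Finset.sum_add_distrib]
  ring

lemma cod_smul (f : C) (X : V) : S.cod (f • X) = f * S.cod X := by
  simp only [cod, S.T3_smul3]
  rw [← Finset.mul_sum]
  ring

lemma cod_neg (X : V) : S.cod (-X) = -S.cod X := by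
  have := S.cod_smul (-1) X
  simpa using this

/-! ### Curvature symmetries -/

lemma lc_bk (X Y Z : V) : S.lc (S.bk X Y) Z = S.lc (S.lc X Y) Z - S.lc (S.lc Y X) Z := by
  rw [S.h_tf, S.lc_sub1]

lemma Rm_swap12 (X Y Z W : V) : S.Rm X Y Z W = -S.Rm Y X Z W := by
  have hR : S.R X Y Z = -S.R Y X Z := by
    simp only [R, S.lc_bk]
    abel
  simp only [Rm, hR, S.g_neg1]

lemma act_comm (X Y : V) (f : C) :
    S.act X (S.act Y f) - S.act Y (S.act X f) = S.act (S.lc X Y) f - S.act (S.lc Y X) f := by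
  rw [← S.h_actbk, S.h_tf, S.act_subX]

lemma Rm_swap34 (X Y Z W : V) : S.Rm X Y Z W = -S.Rm X Y W Z := by
  have m1 : S.act X (S.act Y (S.g Z W)) =
      S.g (S.lc X (S.lc Y Z)) W + S.g (S.lc Y Z) (S.lc X W)
        + S.g (S.lc X Z) (S.lc Y W) + S.g Z (S.lc X (S.lc Y W)) := by
    rw [S.hlc_metric Y Z W, S.hact_addf, S.hlc_metric X (S.lc Y Z) W,
      S.hlc_metric X Z (S.lc Y W)]
    ring
  have m2 : S.act Y (S.act X (S.g Z W)) =
      S.g (S.lc Y (S.lc X Z)) W + S.g (S.lc X Z) (S.lc Y W)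
        + S.g (S.lc Y Z) (S.lc X W) + S.g Z (S.lc Y (S.lc X W)) := by
    rw [S.hlc_metric X Z W, S.hact_addf, S.hlc_metric Y (S.lc X Z) W,
      S.hlc_metric Y Z (S.lc X W)]
    ring
  have m3 : S.act X (S.act Y (S.g Z W)) - S.act Y (S.act X (S.g Z W)) =
      S.act (S.lc X Y) (S.g Z W) - S.act (S.lc Y X) (S.g Z W) := S.act_comm X Y (S.g Z W)
  have m4 : S.act (S.lc X Y) (S.g Z W) = S.g (S.lc (S.lc X Y) Z) W + S.g Z (S.lc (S.lc X Y) W) :=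
    S.hlc_metric _ Z W
  have m5 : S.act (S.lc Y X) (S.g Z W) = S.g (S.lc (S.lc Y X) Z) W + S.g Z (S.lc (S.lc Y X) W) :=
    S.hlc_metric _ Z W
  have n1 := S.hg_symm (S.lc X (S.lc Y W)) Z
  have n2 := S.hg_symm (S.lc Y (S.lc X W)) Z
  have n3 := S.hg_symm (S.lc (S.lc X Y) W) Z
  have n4 := S.hg_symm (S.lc (S.lc Y X) W) Z
  simp only [Rm, R, S.lc_bk, S.g_sub1]
  linear_combination m2 - m1 + m3 + m4 - m5 + n1 - n2 - n3 + n4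

lemma bianchi (X Y Z : V) : S.R X Y Z + S.R Y Z X + S.R Z X Y = 0 := by
  have hj := S.h_jacobi X Y Z
  simp only [S.h_tf, S.lc_sub1, S.lc_sub2] at hj
  simp only [R, S.h_tf, S.lc_sub1]
  rw [← neg_eq_zero]
  abel_nf at hj ⊢
  exact hj

lemma Rm_bianchi (X Y Z W : V) : S.Rm X Y Z W + S.Rm Y Z X W + S.Rm Z X Y W = 0 := by
  have h := S.bianchi X Y Z
  have := congrArg (fun A => S.g A W) h
  simp only [S.hg_add, S.g_zero1] at this
  simpa [Rm] using this

lemma Rm_pair (X Y Z W : V) : S.Rm X Y Z W = S.Rm Z W X Y := by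
  have B1 := S.Rm_bianchi Y Z X W
  have B2 := S.Rm_bianchi Z X W Y
  have B3 := S.Rm_bianchi X W Y Z
  have B4 := S.Rm_bianchi W Y Z X
  have s1 := S.Rm_swap34 Y Z X W
  have s2 := S.Rm_swap34 Z X Y W
  have s3 := S.Rm_swap34 X W Z Y
  have s4 := S.Rm_swap34 W Y X Z
  have t1 := S.Rm_swap12 Y X W Z
  have t2 := S.Rm_swap34 X Y W Z
  have t3 := S.Rm_swap12 W Z X Y
  have t4 := S.Rm_swap34 Z W Y X
  have h2 : (2:C) * (S.Rm X Y Z W - S.Rm Z W X Y) = 0 := by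
    linear_combination B1 + B2 + B3 + B4 - s1 - s2 - s3 - s4 - t1 + t2 - t3 - t4
  exact sub_eq_zero.mp (half_cancel _ h2)

lemma ω_sub1 (X Y Z : V) : S.ω (X - Y) Z = S.ω X Z - S.ω Y Z := by
  simp only [ω, S.g_sub1]

lemma ω_sub2 (X Y Z : V) : S.ω X (Y - Z) = S.ω X Y - S.ω X Z := by
  simp only [ω, S.J_sub, S.g_sub2]

/-! ### Ricci identity -/

lemma H_skew34 (X Y Z W : V) : S.H X Y Z W = -S.H X Y W Z := by
  simp only [H]
  rw [S.T3_skew23 Y Z W, S.act_neg, S.T3_skew23 (S.lc X Y) Z W,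
    S.T3_skew23 Y (S.lc X Z) W, S.T3_skew23 Y Z (S.lc X W)]
  ring_nf

lemma ricci (X Y Z W : V) :
    S.H X Y Z W - S.H Y X Z W = -S.ω (S.R X Y Z) W - S.ω Z (S.R X Y W) := by
  have hc := S.act_comm X Y (S.ω Z W)
  simp only [H, T3, R, S.h_tf, S.lc_sub1, S.lc_sub2, S.act_sub,
    S.ω_add1, S.ω_add2, ω_sub1, ω_sub2]
  linear_combination hc

/-! ### Claim A : the `J∇J` torsion term vanishes -/

lemma gJw (X Y : V) : S.g X (S.J Y) = -S.g Y (S.J X) := by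
  rw [S.hg_symm, S.gJskew, S.hg_symm]

lemma lc_orth (X : V) (a b : Fin (2 * S.n)) :
    S.g (S.lc X (S.e a)) (S.e b) = -S.g (S.e a) (S.lc X (S.e b)) := by
  have h := S.hlc_metric X (S.e a) (S.e b)
  rw [S.act_g_frame] at h
  linear_combination -h

lemma coefA (i j : Fin (2 * S.n)) :
    S.g (S.J (S.lc (S.e j) (S.J (S.e j))) + S.lc (S.e j) (S.e j)) (S.e i)
      = S.g (S.J (S.e j)) (S.lc (S.e j) (S.J (S.e i))) - S.g (S.e j) (S.lc (S.e j) (S.e i)) := by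
  rw [S.hg_add]
  have h1 : S.g (S.J (S.lc (S.e j) (S.J (S.e j)))) (S.e i)
      = S.g (S.J (S.e j)) (S.lc (S.e j) (S.J (S.e i))) := by
    rw [S.gJskew]
    have hm := S.hlc_metric (S.e j) (S.J (S.e i)) (S.J (S.e j))
    rw [S.hJ_iso, S.act_g_frame] at hm
    have hsym := S.hg_symm (S.lc (S.e j) (S.J (S.e i))) (S.J (S.e j))
    linear_combination hm + hsym
  have h2 := S.lc_orth (S.e j) j i
  rw [h1, h2]
  ring

lemma sumA (i : Fin (2 * S.n)) :
    ∑ j, (S.g (S.J (S.e j)) (S.lc (S.e j) (S.J (S.e i))) - S.g (S.e j) (S.lc (S.e j) (S.e i)))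
      = -S.cod (S.J (S.e i)) := by
  rw [cod, neg_neg]
  refine Finset.sum_congr rfl fun j _ => ?_
  simp only [T3, ω]
  rw [S.hJ_sq, S.g_neg2, S.act_neg, S.act_g_frame, S.g_neg2, S.gJ2 (S.e j)]
  have h2 := S.lc_orth (S.e j) j i
  linear_combination -h2

lemma claimA :
    ∑ j, S.cod (S.J (S.lc (S.e j) (S.J (S.e j))) + S.lc (S.e j) (S.e j)) = 0 := by
  calc ∑ j, S.cod (S.J (S.lc (S.e j) (S.J (S.e j))) + S.lc (S.e j) (S.e j))
      = ∑ j, ∑ i, S.g (S.J (S.lc (S.e j) (S.J (S.e j))) + S.lc (S.e j) (S.e j)) (S.e i)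
          * S.cod (S.e i) := by
        exact Finset.sum_congr rfl fun j _ => S.expand S.cod_add S.cod_smul _
    _ = ∑ i, ∑ j, S.g (S.J (S.lc (S.e j) (S.J (S.e j))) + S.lc (S.e j) (S.e j)) (S.e i)
          * S.cod (S.e i) := Finset.sum_comm
    _ = ∑ i, -S.cod (S.J (S.e i)) * S.cod (S.e i) := by
        refine Finset.sum_congr rfl fun i _ => ?_
        rw [← Finset.sum_mul]
        congr 1
        rw [Finset.sum_congr rfl fun j _ => S.coefA i j]
        exact S.sumA i
    _ = ∑ i, ∑ k, -(S.g (S.J (S.e i)) (S.e k) * S.cod (S.e k) * S.cod (S.e i)) := by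
        refine Finset.sum_congr rfl fun i _ => ?_
        rw [S.expand S.cod_add S.cod_smul (S.J (S.e i)), neg_mul, Finset.sum_mul,
          ← Finset.sum_neg_distrib]
    _ = 0 := by
        apply skew_sum
        intro i k
        have h := S.gJskew (S.e i) (S.e k)
        linear_combination (-(S.cod (S.e k) * S.cod (S.e i))) * h

/-! ### Claim B : the coderivative of the coderivative vanishes -/

lemma act_T3_H (X Y Z W : V) :
    S.act X (S.T3 Y Z W)
      = S.H X Y Z W + S.T3 (S.lc X Y) Z W + S.T3 Y (S.lc X Z) W + S.T3 Y Z (S.lc X W) := by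
  simp only [H]; ring

lemma christoffel (j : Fin (2 * S.n)) :
    ∑ i, (S.T3 (S.lc (S.e j) (S.e i)) (S.e i) (S.e j)
      + S.T3 (S.e i) (S.lc (S.e j) (S.e i)) (S.e j)) = 0 := by
  have hexp1 : ∀ i : Fin (2 * S.n), S.T3 (S.lc (S.e j) (S.e i)) (S.e i) (S.e j)
      = ∑ m, S.g (S.lc (S.e j) (S.e i)) (S.e m) * S.T3 (S.e m) (S.e i) (S.e j) :=
    fun i => S.expand (F := fun v => S.T3 v (S.e i) (S.e j))
      (fun a b => S.T3_add1 a b _ _) (fun f a => S.T3_smul1 f a _ _) _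
  have hexp2 : ∀ i : Fin (2 * S.n), S.T3 (S.e i) (S.lc (S.e j) (S.e i)) (S.e j)
      = ∑ m, S.g (S.lc (S.e j) (S.e i)) (S.e m) * S.T3 (S.e i) (S.e m) (S.e j) :=
    fun i => S.expand (F := fun v => S.T3 (S.e i) v (S.e j))
      (fun a b => S.T3_add2 _ a b _) (fun f a => S.T3_smul2 f _ a _) _
  calc ∑ i, (S.T3 (S.lc (S.e j) (S.e i)) (S.e i) (S.e j)
        + S.T3 (S.e i) (S.lc (S.e j) (S.e i)) (S.e j))
      = ∑ i, ∑ m, S.g (S.lc (S.e j) (S.e i)) (S.e m)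
          * (S.T3 (S.e m) (S.e i) (S.e j) + S.T3 (S.e i) (S.e m) (S.e j)) := by
        refine Finset.sum_congr rfl fun i _ => ?_
        rw [hexp1 i, hexp2 i, ← Finset.sum_add_distrib]
        refine Finset.sum_congr rfl fun m _ => ?_
        ring
    _ = 0 := by
        apply skew_sum
        intro i m
        have h1 := S.lc_orth (S.e j) i m
        have h2 := S.hg_symm (S.e i) (S.lc (S.e j) (S.e m))
        have h3 := S.lc_orth (S.e j) m i
        -- g (lc e_j e_i) (e_m) = - g (lc e_j e_m) (e_i)
        have key : S.g (S.lc (S.e j) (S.e i)) (S.e m) = -S.g (S.lc (S.e j) (S.e m)) (S.e i) := by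
          rw [h1, h2, S.hg_symm]
        rw [key]
        ring

lemma D_eq :
    ∑ j, (S.act (S.e j) (S.cod (S.e j)) - S.cod (S.lc (S.e j) (S.e j)))
      = -∑ j, ∑ i, S.H (S.e j) (S.e i) (S.e i) (S.e j) := by
  rw [← Finset.sum_neg_distrib]
  refine Finset.sum_congr rfl fun j _ => ?_
  have h1 : S.act (S.e j) (S.cod (S.e j))
      = -∑ i, (S.H (S.e j) (S.e i) (S.e i) (S.e j)
          + S.T3 (S.lc (S.e j) (S.e i)) (S.e i) (S.e j)
          + S.T3 (S.e i) (S.lc (S.e j) (S.e i)) (S.e j)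
          + S.T3 (S.e i) (S.e i) (S.lc (S.e j) (S.e j))) := by
    rw [cod, S.act_neg, S.act_sum]
    congr 1
    exact Finset.sum_congr rfl fun i _ => S.act_T3_H _ _ _ _
  have h2 : S.cod (S.lc (S.e j) (S.e j))
      = -∑ i, S.T3 (S.e i) (S.e i) (S.lc (S.e j) (S.e j)) := rfl
  have h3 := S.christoffel j
  rw [h1, h2, Finset.sum_add_distrib, Finset.sum_add_distrib, Finset.sum_add_distrib]
  rw [Finset.sum_add_distrib] at h3
  linear_combination -h3

lemma Rm_trsym (X Y Z : V) : S.Rm X Y Y Z = S.Rm Z Y Y X := by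
  rw [S.Rm_pair X Y Y Z, S.Rm_swap12 Y Z X Y, S.Rm_swap34 Z Y X Y]
  ring

lemma T1_zero : ∑ j, ∑ i, S.ω (S.R (S.e j) (S.e i) (S.e i)) (S.e j) = 0 := by
  have hexp : ∀ (A : V) (j : Fin (2 * S.n)),
      S.g A (S.J (S.e j)) = ∑ m, S.g A (S.e m) * S.g (S.e m) (S.J (S.e j)) :=
    fun A j => S.expand (F := fun v => S.g v (S.J (S.e j)))
      (fun a b => S.hg_add a b _) (fun f a => S.hg_smul f a _) A
  calc ∑ j, ∑ i, S.ω (S.R (S.e j) (S.e i) (S.e i)) (S.e j)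
      = ∑ j, ∑ i, ∑ m, S.Rm (S.e j) (S.e i) (S.e i) (S.e m) * S.g (S.e m) (S.J (S.e j)) := by
        refine Finset.sum_congr rfl fun j _ => Finset.sum_congr rfl fun i _ => ?_
        exact hexp (S.R (S.e j) (S.e i) (S.e i)) j
    _ = ∑ j, ∑ m, (∑ i, S.Rm (S.e j) (S.e i) (S.e i) (S.e m)) * S.g (S.e m) (S.J (S.e j)) := by
        refine Finset.sum_congr rfl fun j _ => ?_
        rw [Finset.sum_comm]
        exact Finset.sum_congr rfl fun m _ => (Finset.sum_mul _ _ _).symm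
    _ = 0 := by
        apply skew_sum
        intro j m
        have hq : (∑ i, S.Rm (S.e m) (S.e i) (S.e i) (S.e j))
            = ∑ i, S.Rm (S.e j) (S.e i) (S.e i) (S.e m) :=
          Finset.sum_congr rfl fun i _ => S.Rm_trsym _ _ _
        rw [hq]
        have hg' := S.gJw (S.e m) (S.e j)
        linear_combination (∑ i, S.Rm (S.e j) (S.e i) (S.e i) (S.e m)) * hg'

lemma T2_zero : ∑ j, ∑ i, S.ω (S.e i) (S.R (S.e j) (S.e i) (S.e j)) = 0 := by
  have hexp : ∀ (A : V) (i : Fin (2 * S.n)),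
      S.g A (S.J (S.e i)) = ∑ m, S.g A (S.e m) * S.g (S.e m) (S.J (S.e i)) :=
    fun A i => S.expand (F := fun v => S.g v (S.J (S.e i)))
      (fun a b => S.hg_add a b _) (fun f a => S.hg_smul f a _) A
  calc ∑ j, ∑ i, S.ω (S.e i) (S.R (S.e j) (S.e i) (S.e j))
      = ∑ j, ∑ i, -∑ m, S.Rm (S.e j) (S.e i) (S.e j) (S.e m) * S.g (S.e m) (S.J (S.e i)) := by
        refine Finset.sum_congr rfl fun j _ => Finset.sum_congr rfl fun i _ => ?_
        have h1 : S.ω (S.e i) (S.R (S.e j) (S.e i) (S.e j))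
            = -S.g (S.R (S.e j) (S.e i) (S.e j)) (S.J (S.e i)) := S.gJw _ _
        rw [h1, hexp (S.R (S.e j) (S.e i) (S.e j)) i]
        rfl
    _ = ∑ i, ∑ j, -∑ m, S.Rm (S.e j) (S.e i) (S.e j) (S.e m) * S.g (S.e m) (S.J (S.e i)) :=
        Finset.sum_comm
    _ = ∑ i, -∑ m, (∑ j, S.Rm (S.e j) (S.e i) (S.e j) (S.e m)) * S.g (S.e m) (S.J (S.e i)) := by
        refine Finset.sum_congr rfl fun i _ => ?_
        rw [Finset.sum_neg_distrib]
        congr 1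
        rw [Finset.sum_comm]
        exact Finset.sum_congr rfl fun m _ => (Finset.sum_mul _ _ _).symm
    _ = -∑ i, ∑ m, (∑ j, S.Rm (S.e j) (S.e i) (S.e j) (S.e m)) * S.g (S.e m) (S.J (S.e i)) :=
        Finset.sum_neg_distrib _
    _ = 0 := by
        rw [neg_eq_zero]
        apply skew_sum
        intro i m
        have hq : (∑ j, S.Rm (S.e j) (S.e m) (S.e j) (S.e i))
            = ∑ j, S.Rm (S.e j) (S.e i) (S.e j) (S.e m) :=
          Finset.sum_congr rfl fun j _ => S.Rm_pair (S.e j) (S.e m) (S.e j) (S.e i)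
        rw [hq]
        have hg' := S.gJw (S.e m) (S.e i)
        linear_combination (∑ j, S.Rm (S.e j) (S.e i) (S.e j) (S.e m)) * hg'

lemma SH_zero : ∑ j, ∑ i, S.H (S.e j) (S.e i) (S.e i) (S.e j) = 0 := by
  apply half_cancel
  have hswap : ∑ j, ∑ i, S.H (S.e j) (S.e i) (S.e i) (S.e j)
      = ∑ j, ∑ i, S.H (S.e i) (S.e j) (S.e j) (S.e i) := Finset.sum_comm
  have key : ∀ j i : Fin (2 * S.n),
      S.H (S.e j) (S.e i) (S.e i) (S.e j) + S.H (S.e i) (S.e j) (S.e j) (S.e i)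
        = -S.ω (S.R (S.e j) (S.e i) (S.e i)) (S.e j)
          - S.ω (S.e i) (S.R (S.e j) (S.e i) (S.e j)) := by
    intro j i
    have hs := S.H_skew34 (S.e i) (S.e j) (S.e j) (S.e i)
    have hr := S.ricci (S.e j) (S.e i) (S.e i) (S.e j)
    linear_combination hs + hr
  calc (2:C) * ∑ j, ∑ i, S.H (S.e j) (S.e i) (S.e i) (S.e j)
      = ∑ j, ∑ i, (S.H (S.e j) (S.e i) (S.e i) (S.e j)
          + S.H (S.e i) (S.e j) (S.e j) (S.e i)) := by
        rw [two_mul]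
        nth_rewrite 2 [hswap]
        rw [← Finset.sum_add_distrib]
        exact Finset.sum_congr rfl fun j _ => (Finset.sum_add_distrib).symm
    _ = ∑ j, ∑ i, (-S.ω (S.R (S.e j) (S.e i) (S.e i)) (S.e j)
          - S.ω (S.e i) (S.R (S.e j) (S.e i) (S.e j))) := by
        exact Finset.sum_congr rfl fun j _ => Finset.sum_congr rfl fun i _ => key j i
    _ = 0 := by
        have e1 := S.T1_zero
        have e2 := S.T2_zero
        simp only [Finset.sum_sub_distrib, Finset.sum_neg_distrib] at *
        rw [e1, e2]
        ring

lemma claimB :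
    ∑ j, (S.act (S.e j) (S.cod (S.e j)) - S.cod (S.lc (S.e j) (S.e j))) = 0 := by
  rw [S.D_eq, S.SH_zero, neg_zero]

/-! ### The Lee form layer -/

def θr (r : ℝ) (X : V) : C := algebraMap ℝ C r * S.cod (S.J X)

def N (r : ℝ) (X Y : V) : C := S.act X (S.θr r Y) - S.θr r (S.lc X Y)

def dθr (r : ℝ) (X Y : V) : C :=
  S.act X (S.θr r Y) - S.act Y (S.θr r X) - S.θr r (S.bk X Y)

lemma cod_sub (X Y : V) : S.cod (X - Y) = S.cod X - S.cod Y := by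
  rw [sub_eq_add_neg, S.cod_add, S.cod_neg, sub_eq_add_neg]

lemma θr_add (r : ℝ) (X Y : V) : S.θr r (X + Y) = S.θr r X + S.θr r Y := by
  simp only [θr, S.hJ_add, S.cod_add]; ring

lemma θr_smul (r : ℝ) (f : C) (X : V) : S.θr r (f • X) = f * S.θr r X := by
  simp only [θr, S.hJ_smul, S.cod_smul]; ring

lemma θr_sub (r : ℝ) (X Y : V) : S.θr r (X - Y) = S.θr r X - S.θr r Y := by
  simp only [θr, S.J_sub, S.cod_sub]; ring

lemma N_add1 (r : ℝ) (X X' Y : V) : S.N r (X + X') Y = S.N r X Y + S.N r X' Y := by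
  simp only [N, S.hact_addX, S.hlc_addl, S.θr_add]; ring

lemma N_smul1 (r : ℝ) (f : C) (X Y : V) : S.N r (f • X) Y = f * S.N r X Y := by
  simp only [N, S.hact_smulX, S.hlc_smull, S.θr_smul]; ring

lemma N_add2 (r : ℝ) (X Y Y' : V) : S.N r X (Y + Y') = S.N r X Y + S.N r X Y' := by
  simp only [N, S.θr_add, S.hact_addf, S.hlc_addr]; ring

lemma N_smul2 (r : ℝ) (f : C) (X Y : V) : S.N r X (f • Y) = f * S.N r X Y := by
  simp only [N, S.θr_smul, S.hact_leib, S.hlc_leib, S.θr_add]; ring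

lemma dθr_eq (r : ℝ) (X Y : V) : S.dθr r X Y = S.N r X Y - S.N r Y X := by
  simp only [dθr, N, S.h_tf, S.θr_sub]; ring

lemma dθr_add1 (r : ℝ) (X X' Y : V) :
    S.dθr r (X + X') Y = S.dθr r X Y + S.dθr r X' Y := by
  simp only [S.dθr_eq, S.N_add1, S.N_add2]; ring

lemma dθr_smul1 (r : ℝ) (f : C) (X Y : V) : S.dθr r (f • X) Y = f * S.dθr r X Y := by
  simp only [S.dθr_eq, S.N_smul1, S.N_smul2]; ring

/-! ### Main lemma -/

theorem main (r : ℝ) :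
    ∑ i, ∑ j, S.dθr r (S.e i) (S.e j) * S.ω (S.e i) (S.e j) = 0 := by
  have hNswap : ∑ j, S.N r (S.J (S.e j)) (S.e j) = -∑ j, S.N r (S.e j) (S.J (S.e j)) := by
    calc ∑ j, S.N r (S.J (S.e j)) (S.e j)
        = ∑ j, ∑ k, S.g (S.J (S.e j)) (S.e k) * S.N r (S.e k) (S.e j) := by
          refine Finset.sum_congr rfl fun j _ => ?_
          exact S.expand (F := fun X => S.N r X (S.e j))
            (fun a b => S.N_add1 r a b _) (fun f a => S.N_smul1 r f a _) _
      _ = ∑ k, ∑ j, S.g (S.J (S.e j)) (S.e k) * S.N r (S.e k) (S.e j) := Finset.sum_comm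
      _ = ∑ k, -S.N r (S.e k) (S.J (S.e k)) := by
          refine Finset.sum_congr rfl fun k _ => ?_
          have hexp2 : S.N r (S.e k) (S.J (S.e k))
              = ∑ j, S.g (S.J (S.e k)) (S.e j) * S.N r (S.e k) (S.e j) :=
            S.expand (F := fun Y => S.N r (S.e k) Y)
              (fun a b => S.N_add2 r _ a b) (fun f a => S.N_smul2 r f _ a) _
          rw [hexp2, ← Finset.sum_neg_distrib]
          refine Finset.sum_congr rfl fun j _ => ?_
          have h := S.gJskew (S.e j) (S.e k)
          linear_combination S.N r (S.e k) (S.e j) * h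
      _ = -∑ j, S.N r (S.e j) (S.J (S.e j)) := Finset.sum_neg_distrib _
  have hNval : ∑ j, S.N r (S.e j) (S.J (S.e j)) = 0 := by
    have hper : ∀ j : Fin (2 * S.n), S.N r (S.e j) (S.J (S.e j))
        = -algebraMap ℝ C r * ((S.act (S.e j) (S.cod (S.e j)) - S.cod (S.lc (S.e j) (S.e j)))
            + S.cod (S.J (S.lc (S.e j) (S.J (S.e j))) + S.lc (S.e j) (S.e j))) := by
      intro j
      have h1 : S.θr r (S.J (S.e j)) = -(algebraMap ℝ C r * S.cod (S.e j)) := by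
        rw [θr, S.hJ_sq, S.cod_neg]; ring
      have h2 : S.cod (S.J (S.lc (S.e j) (S.J (S.e j))) + S.lc (S.e j) (S.e j))
          = S.cod (S.J (S.lc (S.e j) (S.J (S.e j)))) + S.cod (S.lc (S.e j) (S.e j)) :=
        S.cod_add _ _
      have h3 : S.θr r (S.lc (S.e j) (S.J (S.e j)))
          = algebraMap ℝ C r * S.cod (S.J (S.lc (S.e j) (S.J (S.e j)))) := rfl
      simp only [N]
      rw [h1, S.act_neg, S.act_aM, h3]
      linear_combination (algebraMap ℝ C r) * h2
    calc ∑ j, S.N r (S.e j) (S.J (S.e j))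
        = -algebraMap ℝ C r * ∑ j, ((S.act (S.e j) (S.cod (S.e j)) - S.cod (S.lc (S.e j) (S.e j)))
            + S.cod (S.J (S.lc (S.e j) (S.J (S.e j))) + S.lc (S.e j) (S.e j))) := by
          rw [Finset.mul_sum]
          exact Finset.sum_congr rfl fun j _ => hper j
      _ = 0 := by
          rw [Finset.sum_add_distrib, S.claimB, S.claimA]; ring
  calc ∑ i, ∑ j, S.dθr r (S.e i) (S.e j) * S.ω (S.e i) (S.e j)
      = ∑ j, ∑ i, S.dθr r (S.e i) (S.e j) * S.ω (S.e i) (S.e j) := Finset.sum_comm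
    _ = ∑ j, S.dθr r (S.J (S.e j)) (S.e j) := by
        refine Finset.sum_congr rfl fun j _ => ?_
        have hexp := S.expand (F := fun X => S.dθr r X (S.e j))
          (fun a b => S.dθr_add1 r a b _) (fun f a => S.dθr_smul1 r f a _) (S.J (S.e j))
        rw [hexp]
        refine Finset.sum_congr rfl fun i _ => ?_
        have hsym : S.ω (S.e i) (S.e j) = S.g (S.J (S.e j)) (S.e i) := S.hg_symm _ _
        rw [hsym]; ring
    _ = ∑ j, (S.N r (S.J (S.e j)) (S.e j) - S.N r (S.e j) (S.J (S.e j))) :=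
        Finset.sum_congr rfl fun j _ => S.dθr_eq r _ _
    _ = 0 := by
        rw [Finset.sum_sub_distrib, hNswap, hNval]; ring

end Setup
end AHProof

/-- On any almost Hermitian manifold of dimension `2n` with `n > 1`, the
component of `dθ` proportional to the Kähler form `ω` vanishes: `⟨dθ, ω⟩ = 0` pointwise.
The manifold is modelled formally through its ring of smooth functions `C`, its `C`-module of
vector fields `V`, the Lie bracket `bk`, the derivation action `act` of vector fields on
functions, the metric `g`, the almost complex structure `J` (with `J² = -1`, compatible with
`g`), a local orthonormal frame `e`, and the Levi-Civita connection `lc`. -/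
theorem stmt_0
    (n : ℕ) (hn : 1 < n)
    (C V : Type) [CommRing C] [Algebra ℝ C] [AddCommGroup V] [Module C V]
    (bk : V → V → V) (act : V → C → C) (g : V → V → C) (J : V → V)
    (e : Fin (2 * n) → V) (lc : V → V → V)
    -- metric axioms
    (hg_symm : ∀ X Y, g X Y = g Y X)
    (hg_add : ∀ X Y Z, g (X + Y) Z = g X Z + g Y Z)
    (hg_smul : ∀ (f : C) (X Y), g (f • X) Y = f * g X Y)
    -- almost complex structure axioms
    (hJ_add : ∀ X Y, J (X + Y) = J X + J Y)
    (hJ_smul : ∀ (f : C) (X), J (f • X) = f • J X)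
    (hJ_sq : ∀ X, J (J X) = -X)
    (hJ_iso : ∀ X Y, g (J X) (J Y) = g X Y)
    -- orthonormal local frame
    (h_orth : ∀ i j, g (e i) (e j) = if i = j then 1 else 0)
    (h_span : ∀ X, X = ∑ i, g X (e i) • e i)
    -- derivation axioms for the action of vector fields on functions
    (hact_addf : ∀ X (f h : C), act X (f + h) = act X f + act X h)
    (hact_leib : ∀ X (f h : C), act X (f * h) = f * act X h + act X f * h)
    (hact_addX : ∀ X Y f, act (X + Y) f = act X f + act Y f)
    (hact_smulX : ∀ (f : C) X h, act (f • X) h = f * act X h)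
    (hact_const : ∀ X (r : ℝ), act X (algebraMap ℝ C r) = 0)
    -- the bracket: torsion-freeness of `lc`, Jacobi identity, compatibility with `act`
    (h_tf : ∀ X Y, bk X Y = lc X Y - lc Y X)
    (h_jacobi : ∀ X Y Z, bk (bk X Y) Z + bk (bk Y Z) X + bk (bk Z X) Y = 0)
    (h_actbk : ∀ X Y f, act (bk X Y) f = act X (act Y f) - act Y (act X f))
    -- Levi-Civita connection axioms
    (hlc_addl : ∀ X Y Z, lc (X + Y) Z = lc X Z + lc Y Z)
    (hlc_addr : ∀ X Y Z, lc X (Y + Z) = lc X Y + lc X Z)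
    (hlc_smull : ∀ (f : C) X Y, lc (f • X) Y = f • lc X Y)
    (hlc_leib : ∀ (f : C) X Y, lc X (f • Y) = act X f • Y + f • lc X Y)
    (hlc_metric : ∀ X Y Z, act X (g Y Z) = g (lc X Y) Z + g Y (lc X Z)) :
    -- the Kähler form ω = g(·, J·)
    let ω : V → V → C := fun X Y => g X (J Y)
    -- the covariant derivative (∇_X ω)(Y, Z)
    let covω : V → V → V → C := fun X Y Z => act X (ω Y Z) - ω (lc X Y) Z - ω Y (lc X Z)
    -- the coderivative d*ω(X) = -∑ᵢ (∇_{eᵢ} ω)(eᵢ, X)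
    let codω : V → C := fun X => -∑ i, covω (e i) (e i) X
    -- the Lee form θ = -(1/(n-1)) J d*ω, i.e. θ(X) = (1/(n-1)) (d*ω)(J X)
    let θ : V → C := fun X => algebraMap ℝ C ((n : ℝ) - 1)⁻¹ * codω (J X)
    -- the exterior derivative dθ(X, Y) = X θ(Y) - Y θ(X) - θ([X, Y])
    let dθ : V → V → C := fun X Y => act X (θ Y) - act Y (θ X) - θ (bk X Y)
    -- ⟨dθ, ω⟩ = 0 pointwise
    algebraMap ℝ C (1 / 2) * ∑ i, ∑ j, dθ (e i) (e j) * ω (e i) (e j) = 0 := by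
  intro ω covω codω θ dθ
  have h := AHProof.Setup.main (C := C) (V := V)
    ⟨n, bk, act, g, J, e, lc, hg_symm, hg_add, hg_smul, hJ_add, hJ_smul, hJ_sq, hJ_iso,
      h_orth, h_span, hact_addf, hact_leib, hact_addX, hact_smulX, hact_const, h_tf,
      h_jacobi, h_actbk, hlc_addl, hlc_addr, hlc_smull, hlc_leib, hlc_metric⟩
    (((n : ℝ) - 1)⁻¹)
  have h2 : ∑ i, ∑ j, dθ (e i) (e j) * ω (e i) (e j) = 0 := h
  rw [h2, mul_zero]
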